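/- Let L = Lie_ℚ(u_1,…,u_r)/((l)) be the quadratic Lie algebra over ℚ on r ≥ 3 generators, each of positive degree, with a single quadratic relation l of the form u_1⊗u_r − Σ_{(i,j)≠(1,r)} a_{ij} u_i⊗u_j lying in the free Lie algebra. Then L is infinite-dimensional over ℚ; in particular there exist l-standard Lyndon words of arbitrarily large length. -/

import Mathlib

open Polynomial

attribute [local instance] LieRing.ofAssociativeRing

noncomputable def Eop (m : ℕ) : Module.End ℚ (Polynomial ℚ) :=
  (LinearMap.mulLeft ℚ ((X : ℚ[X]) ^ m)) ∘ₗ (derivative : ℚ[X] →ₗ[ℚ] ℚ[X])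

lemma Eop_monomial (m j : ℕ) (c : ℚ) :
    Eop m (monomial j c) = monomial (m + (j - 1)) (c * j) := by
  simp [Eop, derivative_monomial, X_pow_eq_monomial, monomial_mul_monomial]

lemma Eop_bracket (k : ℕ) :
    ⁅Eop 3, Eop (2 * k)⁆ = ((2 * k : ℚ) - 3) • Eop (2 * k + 2) := by
  apply Polynomial.lhom_ext'
  intro j
  ext c
  simp only [LinearMap.coe_comp, Function.comp_apply, LinearMap.smul_apply,
    Ring.lie_def, LinearMap.sub_apply, Module.End.mul_apply, Eop_monomial]
  rcases j with _ | j
  · simp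
  · rcases Nat.eq_zero_or_pos (2 * k + j) with h | h
    · obtain ⟨hk, hj⟩ : k = 0 ∧ j = 0 := by omega
      subst hk; subst hj
      simp [Eop_monomial, smul_monomial]
    · have h1 : 2 * k + (j + 1 - 1) = 2 * k + j := by omega
      have h2 : 3 + (2 * k + j - 1) = 2 * k + 2 + j := by omega
      have h3 : 3 + (j + 1 - 1) = 3 + j := by omega
      have h4 : 2 * k + (3 + j - 1) = 2 * k + 2 + j := by omega
      rw [h1, h2, h3, h4, smul_monomial, ← monomial_sub]
      congr 1
      simp only [smul_eq_mul]
      push_cast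
      ring

lemma Eop_apply_X (m : ℕ) : Eop m (X : ℚ[X]) = monomial m 1 := by
  have := Eop_monomial m 1 1
  simpa [X, Eop] using this

lemma linearIndependent_monomials :
    LinearIndependent ℚ (fun k : ℕ => (monomial (2 * k) (1 : ℚ) : ℚ[X])) := by
  rw [linearIndependent_iff']
  intro s g h i hi
  have := congrArg (fun p => Polynomial.coeff p (2 * i)) h
  simp only [Polynomial.finset_sum_coeff, Polynomial.coeff_smul, Polynomial.coeff_monomial,
    Polynomial.coeff_zero] at this
  rw [Finset.sum_eq_single i] at this
  · simpa using this
  · intro b _ hb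
    rw [smul_eq_mul, if_neg (by omega : ¬ 2 * b = 2 * i), mul_zero]
  · intro h'; exact absurd hi h'

lemma linearIndependent_Eop : LinearIndependent ℚ (fun k : ℕ => Eop (2 * k)) := by
  have hmap : LinearIndependent ℚ
      ((LinearMap.applyₗ (X : ℚ[X]) : Module.End ℚ ℚ[X] →ₗ[ℚ] ℚ[X]) ∘ fun k : ℕ => Eop (2 * k)) := by
    have : ((LinearMap.applyₗ (X : ℚ[X]) : Module.End ℚ ℚ[X] →ₗ[ℚ] ℚ[X]) ∘ fun k : ℕ => Eop (2 * k))
        = fun k : ℕ => (monomial (2 * k) (1 : ℚ) : ℚ[X]) := by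
      funext k
      simp [LinearMap.applyₗ_apply_apply, Eop_apply_X]
    rw [this]
    exact linearIndependent_monomials
  exact hmap.of_comp _

/-- the coefficients `c k = ∏_{j<k} (2j-3)`, all nonzero. -/
def cc : ℕ → ℚ
  | 0 => 1
  | k + 1 => ((2 * k : ℚ) - 3) * cc k

lemma cc_ne_zero (k : ℕ) : cc k ≠ 0 := by
  induction k with
  | zero => norm_num [cc]
  | succ k ih =>
    have h1 : ((2 * k : ℚ) - 3) ≠ 0 := by
      intro h
      have : (2 * k : ℚ) = 3 := by linarith
      have : (2 * k : ℕ) = 3 := by exact_mod_cast this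
      omega
    exact mul_ne_zero h1 ih

lemma lex_lt_append {α : Type} [LinearOrder α] (p : List α) {a b : α} (s t : List α)
    (h : a < b) : p ++ a :: s < p ++ b :: t := by
  induction p with
  | nil => exact List.Lex.rel h
  | cons x xs ih => exact List.Lex.cons ih

lemma chain'_replicate_append {α : Type} (P : α → α → Prop) (a b : α)
    (haa : P a a) (hab : P a b) : ∀ n, List.Chain' P (List.replicate n a ++ [b])
  | 0 => by simp [List.Chain']
  | n + 1 => by
    rw [List.replicate_succ, List.cons_append]
    refine List.isChain_cons.mpr ⟨?_, chain'_replicate_append P a b haa hab n⟩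
    intro y hy
    cases n with
    | zero => simp at hy; subst hy; exact hab
    | succ m =>
      rw [List.replicate_succ, List.cons_append] at hy
      simp at hy; subst hy; exact haa

section aux
variable {r : ℕ}

/-- the operators assigned to the generators -/
noncomputable def TOp (K : Fin r) (t : Fin r → ℚ) (i : Fin r) : Module.End ℚ ℚ[X] :=
  if i = K then Eop 3 else t i • Eop 0

lemma bracket_Top (K : Fin r) (t : Fin r → ℚ) (htK : t K = 0) (i j : Fin r) :
    ⁅TOp K t i, TOp K t j⁆ =
      ((if j = K then t i else 0) - (if i = K then t j else 0)) • ⁅Eop 0, Eop 3⁆ := by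
  unfold TOp
  by_cases hi : i = K <;> by_cases hj : j = K
  · rw [if_pos hi, if_pos hj, if_pos hi, if_pos hj, lie_self, hi, hj, htK, sub_self, zero_smul]
  · rw [if_pos hi, if_neg hj, if_neg hj, if_pos hi]
    simp only [Ring.lie_def, mul_smul_comm, smul_mul_assoc, smul_sub, zero_sub, neg_smul,
      smul_neg, neg_sub]
    abel
  · rw [if_neg hi, if_pos hj, if_pos hj, if_neg hi, sub_zero]
    simp only [Ring.lie_def, mul_smul_comm, smul_mul_assoc, smul_sub]
  · rw [if_neg hi, if_neg hj, if_neg hj, if_neg hi, sub_self, zero_smul]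
    simp only [Ring.lie_def, mul_smul_comm, smul_mul_assoc, smul_smul, mul_comm (t i) (t j),
      sub_self]

lemma phi_rel_zero (a : Fin r × Fin r → ℚ) (i0 i1 K : Fin r) (t : Fin r → ℚ)
    (hi0K : i0 ≠ K) (hi1K : i1 ≠ K) (htK : t K = 0)
    (hsum : ∑ i : Fin r, (a (i, K) - a (K, i)) * t i = 0) :
    FreeLieAlgebra.lift ℚ (TOp K t)
      (⁅FreeLieAlgebra.of ℚ i0, FreeLieAlgebra.of ℚ i1⁆ -
        ∑ p ∈ Finset.univ.erase (i0, i1),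
          a p • ⁅FreeLieAlgebra.of ℚ p.1, FreeLieAlgebra.of ℚ p.2⁆) = 0 := by
  set φ := FreeLieAlgebra.lift ℚ (TOp K t) with hφ
  have hexp : φ (⁅FreeLieAlgebra.of ℚ i0, FreeLieAlgebra.of ℚ i1⁆ -
        ∑ p ∈ Finset.univ.erase (i0, i1),
          a p • ⁅FreeLieAlgebra.of ℚ p.1, FreeLieAlgebra.of ℚ p.2⁆) =
      ⁅TOp K t i0, TOp K t i1⁆ -
        ∑ p ∈ Finset.univ.erase (i0, i1), a p • ⁅TOp K t p.1, TOp K t p.2⁆ := by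
    have h0 : ∀ z, φ z = φ.toLinearMap z := fun z => rfl
    rw [h0, map_sub, map_sum]
    simp only [map_smul, ← h0, LieHom.coe_toLinearMap, LieHom.map_lie, hφ,
      FreeLieAlgebra.lift_of_apply]
  rw [hexp]
  have hbr01 : ⁅TOp K t i0, TOp K t i1⁆ = 0 := by
    rw [bracket_Top K t htK, if_neg hi1K, if_neg hi0K, sub_self, zero_smul]
  have herase : ∑ p ∈ Finset.univ.erase (i0, i1), a p • ⁅TOp K t p.1, TOp K t p.2⁆
      = ∑ p : Fin r × Fin r, a p • ⁅TOp K t p.1, TOp K t p.2⁆ := by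
    rw [Finset.sum_erase_eq_sub (Finset.mem_univ _), hbr01, smul_zero, sub_zero]
  rw [hbr01, herase, zero_sub, neg_eq_zero]
  have hterm : ∀ p : Fin r × Fin r, a p • ⁅TOp K t p.1, TOp K t p.2⁆ =
      (a p * ((if p.2 = K then t p.1 else 0) - (if p.1 = K then t p.2 else 0))) •
        ⁅Eop 0, Eop 3⁆ := by
    intro p; rw [bracket_Top K t htK, smul_smul]
  rw [Finset.sum_congr rfl (fun p _ => hterm p), ← Finset.sum_smul]
  rw [Fintype.sum_prod_type]
  have hinner : ∀ i : Fin r, ∑ j : Fin r,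
      a (i, j) * ((if j = K then t i else 0) - (if i = K then t j else 0))
      = a (i, K) * t i - (if i = K then ∑ j : Fin r, a (i, j) * t j else 0) := by
    intro i
    rw [show (fun j => a (i, j) * ((if j = K then t i else 0) - (if i = K then t j else 0)))
        = fun j => (if j = K then a (i, j) * t i else 0) -
            (if i = K then a (i, j) * t j else 0) by
      funext j; by_cases hj : j = K <;> by_cases hi : i = K <;> simp [hi, hj] <;> ring]
    rw [Finset.sum_sub_distrib, Finset.sum_ite_eq' Finset.univ K (fun j => a (i, j) * t i)]
    simp only [Finset.mem_univ, if_true]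
    congr 1
    by_cases hi : i = K
    · simp [hi]
    · simp [hi]
  rw [Finset.sum_congr rfl (fun i _ => hinner i), Finset.sum_sub_distrib]
  rw [Finset.sum_ite_eq' Finset.univ K (fun i => ∑ j : Fin r, a (i, j) * t j)]
  simp only [Finset.mem_univ, if_true]
  have : ∑ i : Fin r, a (i, K) * t i - ∑ j : Fin r, a (K, j) * t j
      = ∑ i : Fin r, (a (i, K) - a (K, i)) * t i := by
    rw [← Finset.sum_sub_distrib]
    exact Finset.sum_congr rfl fun i _ => by ring
  rw [this, hsum, zero_smul]

end aux

lemma lie_smul_end (c : ℚ) (f g : Module.End ℚ ℚ[X]) : ⁅f, c • g⁆ = c • ⁅f, g⁆ := by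
  simp only [Ring.lie_def, mul_smul_comm, smul_mul_assoc, smul_sub]




/-- A word over an ordered alphabet is a *Lyndon word* if it is nonempty and strictly
lexicographically smaller than each of its nontrivial cyclic rotations. -/
def IsLyndon {α : Type} [LinearOrder α] (w : List α) : Prop :=
  w ≠ [] ∧ ∀ k : ℕ, 0 < k → k < w.length → w < w.rotate k

/-- Let `L = Lie_ℚ(u_1,…,u_r)/((l))` be the quadratic Lie algebra over
`ℚ` on `r ≥ 3` generators with a single quadratic relation
`l = ⁅u_1, u_r⁆ - Σ_{(i,j) ≠ (1,r)} a_{ij} ⁅u_i, u_j⁆` (a quadratic element of the free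
Lie algebra with leading term `u_1 ⊗ u_r`).  Then `L` is infinite-dimensional over `ℚ`;
in particular there exist `l`-standard Lyndon words (Lyndon words avoiding the
submonomial `u_1 u_r`) of arbitrarily large length. -/
theorem stmt12 (r : ℕ) (hr : 3 ≤ r) (a : Fin r × Fin r → ℚ) :
    let i0 : Fin r := ⟨0, by omega⟩
    let i1 : Fin r := ⟨r - 1, by omega⟩
    let l : FreeLieAlgebra ℚ (Fin r) :=
      ⁅FreeLieAlgebra.of ℚ i0, FreeLieAlgebra.of ℚ i1⁆ -
        ∑ p ∈ Finset.univ.erase (i0, i1),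
          a p • ⁅FreeLieAlgebra.of ℚ p.1, FreeLieAlgebra.of ℚ p.2⁆
    ∀ I : LieIdeal ℚ (FreeLieAlgebra ℚ (Fin r)),
      I = LieSubmodule.lieSpan ℚ (FreeLieAlgebra ℚ (Fin r)) {l} →
      ¬ FiniteDimensional ℚ (FreeLieAlgebra ℚ (Fin r) ⧸ I) ∧
        ∀ N : ℕ, ∃ w : List (Fin r),
          IsLyndon w ∧ (w.Chain' fun s t => ¬(s = i0 ∧ t = i1)) ∧ N < w.length := by

  intro i0 i1 l I hI
  have hK : (1 : ℕ) < r := by omega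
  refine ⟨?_, ?_⟩
  · -- infinite-dimensionality
    set K : Fin r := ⟨1, hK⟩ with hKdef
    have hi0K : i0 ≠ K := by simp [i0, Fin.ext_iff]
    have hi1K : i1 ≠ K := by simp [i1, hKdef, Fin.ext_iff]; omega
    have hi01 : i0 ≠ i1 := by simp [i0, i1, Fin.ext_iff]; omega
    obtain ⟨c0, c1, hsum, istar, histar, histarK⟩ :
        ∃ c0 c1 : ℚ, c0 * (a (i0, K) - a (K, i0)) + c1 * (a (i1, K) - a (K, i1)) = 0 ∧
          ∃ istar : Fin r,
            ((if istar = i0 then c0 else 0) + (if istar = i1 then c1 else 0)) ≠ 0 ∧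
              istar ≠ K := by
      by_cases h0 : a (i0, K) - a (K, i0) = 0
      · exact ⟨1, 0, by rw [h0]; ring, i0, by simp [hi01], hi0K⟩
      · refine ⟨a (i1, K) - a (K, i1), -(a (i0, K) - a (K, i0)), by ring, i1, ?_, hi1K⟩
        simp only [if_neg (Ne.symm hi01), eq_self_iff_true, if_true, zero_add, neg_ne_zero]
        exact h0
    set t : Fin r → ℚ := fun i => (if i = i0 then c0 else 0) + (if i = i1 then c1 else 0)
      with htdef
    have htK : t K = 0 := by
      simp [htdef, Ne.symm hi0K, Ne.symm hi1K]
    have htsum : ∑ i : Fin r, (a (i, K) - a (K, i)) * t i = 0 := by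
      simp only [htdef, mul_add, mul_ite, mul_zero, Finset.sum_add_distrib,
        Finset.sum_ite_eq', Finset.mem_univ, if_true]
      linarith [hsum]
    set φ : FreeLieAlgebra ℚ (Fin r) →ₗ⁅ℚ⁆ Module.End ℚ ℚ[X] :=
      FreeLieAlgebra.lift ℚ (TOp K t) with hφdef
    have hφl : φ l = 0 := phi_rel_zero a i0 i1 K t hi0K hi1K htK htsum
    -- the iterated brackets
    set vv : ℕ → FreeLieAlgebra ℚ (Fin r) := fun k =>
      Nat.rec (FreeLieAlgebra.of ℚ istar)
        (fun _ ih => ⁅FreeLieAlgebra.of ℚ K, ih⁆) k with hvv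
    have hφvv : ∀ k : ℕ, φ (vv k) = (t istar * cc k) • Eop (2 * k) := by
      intro k
      induction k with
      | zero =>
        show φ (FreeLieAlgebra.of ℚ istar) = _
        rw [hφdef]
        rw [FreeLieAlgebra.lift_of_apply]
        rw [show TOp K t istar = t istar • Eop 0 from if_neg histarK]
        norm_num [cc]
      | succ k ih =>
        show φ ⁅FreeLieAlgebra.of ℚ K, vv k⁆ = _
        rw [LieHom.map_lie, ih, hφdef, FreeLieAlgebra.lift_of_apply,
          show TOp K t K = Eop 3 from if_pos rfl]
        rw [lie_smul_end, Eop_bracket, smul_smul]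
        rw [show 2 * (k + 1) = 2 * k + 2 by ring]
        congr 1
        rw [show cc (k + 1) = ((2 * k : ℚ) - 3) * cc k from rfl]
        ring
    -- the ideal is contained in the kernel
    have hker : ∀ x, x ∈ I → φ x = 0 := by
      intro x hx
      rw [hI] at hx
      have hle : LieSubmodule.lieSpan ℚ (FreeLieAlgebra ℚ (Fin r)) {l} ≤ φ.ker := by
        rw [LieSubmodule.lieSpan_le]
        intro z hz
        rw [Set.mem_singleton_iff] at hz
        subst hz
        exact LieHom.mem_ker.mpr hφl
      exact LieHom.mem_ker.mp (hle hx)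
    have hker' : LieSubmodule.toSubmodule I ≤ LinearMap.ker φ.toLinearMap := by
      intro x hx
      exact LinearMap.mem_ker.mpr (hker x hx)
    -- lift to the quotient
    intro hFD
    set ψ : (FreeLieAlgebra ℚ (Fin r) ⧸ I) →ₗ[ℚ] Module.End ℚ ℚ[X] :=
      Submodule.liftQ (LieSubmodule.toSubmodule I) φ.toLinearMap hker' with hψdef
    have htistar : t istar ≠ 0 := histar
    have hunits : LinearIndependent ℚ
        (fun k : ℕ => (t istar * cc k) • Eop (2 * k)) := by
      have := linearIndependent_Eop.units_smul
        (fun k => Units.mk0 (t istar * cc k) (mul_ne_zero htistar (cc_ne_zero k)))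
      convert this using 1
      funext k; rfl
    have hlin : LinearIndependent ℚ
        (fun k : ℕ => (LieSubmodule.Quotient.mk (N := I) (vv k) :
          FreeLieAlgebra ℚ (Fin r) ⧸ I)) := by
      apply LinearIndependent.of_comp ψ
      have hcomp : (⇑ψ ∘ fun k : ℕ => (LieSubmodule.Quotient.mk (N := I) (vv k) :
          FreeLieAlgebra ℚ (Fin r) ⧸ I)) = fun k : ℕ => (t istar * cc k) • Eop (2 * k) := by
        funext k
        simp only [Function.comp_apply, hψdef]
        rw [show (LieSubmodule.Quotient.mk (N := I) (vv k) : FreeLieAlgebra ℚ (Fin r) ⧸ I)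
            = Submodule.Quotient.mk (vv k) from rfl]
        exact hφvv k
      rw [hcomp]
      exact hunits
    have := hlin.lt_aleph0_of_finiteDimensional
    rw [Cardinal.mk_nat] at this
    exact lt_irrefl _ this
  · -- Lyndon words of arbitrary length
    intro N
    have hK1 : (1 : ℕ) < r := by omega
    set K : Fin r := ⟨1, hK1⟩ with hKdef
    have hi01 : i0 ≠ i1 := by simp [i0, i1, Fin.ext_iff]; omega
    have hKi1 : K ≠ i1 := by simp [i1, hKdef, Fin.ext_iff]; omega
    have hi0K : i0 < K := by simp [i0, hKdef, Fin.lt_def]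
    refine ⟨List.replicate (N + 1) i0 ++ [K], ⟨by simp, ?_⟩, ?_, by
      simp only [List.length_append, List.length_replicate, List.length_singleton]; omega⟩
    · intro k hk hklen
      simp only [List.length_append, List.length_replicate, List.length_singleton] at hklen
      have hkle : k ≤ N + 1 := by omega
      have hsplit : List.replicate (N + 1) i0 ++ [K] =
          List.replicate k i0 ++ (List.replicate (N + 1 - k) i0 ++ [K]) := by
        rw [← List.append_assoc, ← List.replicate_add]
        congr 2
        omega
      have hrot : (List.replicate (N + 1) i0 ++ [K]).rotate k =
          List.replicate (N + 1 - k) i0 ++ (K :: List.replicate k i0) := by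
        have hrae := List.rotate_append_length_eq (List.replicate k i0)
          (List.replicate (N + 1 - k) i0 ++ [K])
        rw [List.length_replicate] at hrae
        rw [hsplit, hrae, List.append_assoc]
        rfl
      rw [hrot]
      obtain ⟨k', rfl⟩ : ∃ k', k = k' + 1 := ⟨k - 1, by omega⟩
      have hsplit' : List.replicate (N + 1) i0 ++ [K] =
          List.replicate (N + 1 - (k' + 1)) i0 ++
            (i0 :: (List.replicate k' i0 ++ [K])) := by
        rw [show (i0 :: (List.replicate k' i0 ++ [K]) : List (Fin r)) =
            List.replicate (k' + 1) i0 ++ [K] by rw [List.replicate_succ]; rfl]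
        rw [← List.append_assoc, ← List.replicate_add]
        congr 2
        omega
      rw [hsplit']
      exact lex_lt_append _ _ _ hi0K
    · apply chain'_replicate_append
      · rintro ⟨-, h⟩; exact hi01 h
      · rintro ⟨-, h⟩; exact hKi1 h
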